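/- Let ε^{n+1}, ε^n : V → ℝ be functions on a finite nonempty vertex set V, and suppose that for each vertex i there exist nonnegative weights w_{ij} ≥ 0 (j ranging over V) such that ε^{n+1}(i)·(1 + Σ_j w_{ij}) = ε^n(i) + Σ_j w_{ij}·ε^{n+1}(j). Then max_{i∈V} |ε^{n+1}(i)| ≤ max_{i∈V} |ε^n(i)|. -/

import Mathlib

theorem implicit_scheme_stable {V : Type*} [Fintype V] [Nonempty V]
    (εn εn1 : V → ℝ) (w : V → V → ℝ) (hw : ∀ i j, 0 ≤ w i j)
    (h : ∀ i, εn1 i * (1 + ∑ j, w i j) = εn i + ∑ j, w i j * εn1 j) :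
    (Finset.univ.sup' Finset.univ_nonempty fun i => |εn1 i|) ≤
      Finset.univ.sup' Finset.univ_nonempty fun i => |εn i| := by
  obtain ⟨i, -, hi⟩ := Finset.exists_mem_eq_sup' Finset.univ_nonempty fun i => |εn1 i|
  rw [hi]
  set M := |εn1 i| with hM
  set N := Finset.univ.sup' Finset.univ_nonempty fun i => |εn i| with hN
  have hS : (0:ℝ) ≤ ∑ j, w i j := Finset.sum_nonneg fun j _ => hw i j
  have hNle : |εn i| ≤ N := hN ▸ Finset.le_sup' (fun i => |εn i|) (Finset.mem_univ i)
  have hMj : ∀ j, |εn1 j| ≤ M := fun j => hi ▸ Finset.le_sup' (fun i => |εn1 i|) (Finset.mem_univ j)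
  have key : M * (1 + ∑ j, w i j) ≤ N + (∑ j, w i j) * M := by
    calc M * (1 + ∑ j, w i j) = |εn1 i * (1 + ∑ j, w i j)| := by
          rw [abs_mul, abs_of_nonneg (show (0:ℝ) ≤ 1 + ∑ j, w i j by linarith)]
      _ = |εn i + ∑ j, w i j * εn1 j| := by rw [h i]
      _ ≤ |εn i| + |∑ j, w i j * εn1 j| := abs_add_le _ _
      _ ≤ N + ∑ j, |w i j * εn1 j| := by
          gcongr
          exact Finset.abs_sum_le_sum_abs _ _
      _ ≤ N + ∑ j, w i j * M := by
          refine add_le_add_right (Finset.sum_le_sum fun j _ => ?_) N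
          rw [abs_mul, abs_of_nonneg (hw i j)]
          exact mul_le_mul_of_nonneg_left (hMj j) (hw i j)
      _ = N + (∑ j, w i j) * M := by rw [Finset.sum_mul]
  nlinarith [key]
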